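/- (Lemma 3.1, sufficiency part.) Let S0 be a q×q real matrix with spectral radius L = ρ(S0) > 0, and let H be an N×N real matrix such that 0 is not a complex eigenvalue of H. For each complex eigenvalue h of H write Δ(h) = |h|²/L² − (Im h)². Suppose Δ(h) > 0 for every complex eigenvalue h of H, and suppose μ is a real number satisfying, for every complex eigenvalue h of H, (Re h − √Δ(h))/|h|² < μ < (Re h + √Δ(h))/|h|². Then the matrix I_N⊗S0 − μ(H⊗S0) is Schur. -/

import Mathlib

open Matrix Kronecker

/-- The complex eigenvalues (spectrum of the complexification) of a real square matrix. -/
def specC {ι : Type} [Fintype ι] [DecidableEq ι] (M : Matrix ι ι ℝ) : Set ℂ :=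
  spectrum ℂ (M.map (fun x => (x : ℂ)))

/-- A real square matrix is Schur if all its complex eigenvalues have modulus `< 1`. -/
def IsSchur {ι : Type} [Fintype ι] [DecidableEq ι] (M : Matrix ι ι ℝ) : Prop :=
  ∀ z ∈ specC M, ‖z‖ < 1


section Aux
open Polynomial

variable {n : Type*} [Fintype n] [DecidableEq n]

lemma det_eval_charpoly (M : Matrix n n ℂ) (z : ℂ) :
    M.charpoly.eval z = (z • (1 : Matrix n n ℂ) - M).det := by
  rw [charpoly, eval_det, matPolyEquiv_charmatrix]
  simp [smul_one_eq_diagonal]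

lemma mem_spectrum_iff_det (M : Matrix n n ℂ) (z : ℂ) :
    z ∈ spectrum ℂ M ↔ (z • (1 : Matrix n n ℂ) - M).det = 0 := by
  rw [spectrum.mem_iff, Matrix.isUnit_iff_isUnit_det, isUnit_iff_ne_zero, not_not,
    Algebra.algebraMap_eq_smul_one]

lemma root_mem_spectrum (M : Matrix n n ℂ) {z : ℂ} (h : M.charpoly.IsRoot z) :
    z ∈ spectrum ℂ M := by
  rw [mem_spectrum_iff_det, ← det_eval_charpoly]; exact h

lemma kron_spectrum {m : Type*} [Fintype m] [DecidableEq m]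
    (A : Matrix m m ℂ) (B : Matrix n n ℂ) {z : ℂ} (hz : z ≠ 0)
    (hmem : z ∈ spectrum ℂ (A ⊗ₖ B)) :
    ∃ a ∈ spectrum ℂ A, ∃ b ∈ spectrum ℂ B, z = a * b := by
  by_contra hcon
  push_neg at hcon
  rw [mem_spectrum_iff_det] at hmem
  obtain ⟨v, hv0, hv⟩ := (Matrix.exists_mulVec_eq_zero_iff).2 hmem
  have hvz : (A ⊗ₖ B).mulVec v = z • v := by
    rw [sub_mulVec, smul_mulVec, one_mulVec, sub_eq_zero] at hv
    exact hv.symm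
  set V : Matrix m n ℂ := Matrix.of (fun i j => v (i, j)) with hVdef
  have hVrel : A * V * Bᵀ = z • V := by
    ext i j
    have h1 := congrFun hvz (i, j)
    simp only [mulVec, dotProduct, Fintype.sum_prod_type, kroneckerMap_apply,
      Pi.smul_apply, smul_eq_mul] at h1
    simp only [mul_apply, Matrix.smul_apply, transpose_apply, smul_eq_mul, hVdef, of_apply,
      Finset.sum_mul]
    rw [Finset.sum_comm, ← h1]
    refine Finset.sum_congr rfl fun k _ => Finset.sum_congr rfl fun l _ => by ring
  obtain ⟨l, hl⟩ : ∃ L : List ℂ, (L : Multiset ℂ) = A.charpoly.roots :=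
    ⟨_, Multiset.coe_toList _⟩
  have hsplit : A.charpoly = (l.map fun a => X - C a).prod := by
    rw [(IsAlgClosed.splits A.charpoly).eq_prod_roots_of_monic A.charpoly_monic, ← hl, Multiset.map_coe, Multiset.prod_coe]
  have key : ∀ (s : List ℂ), ∀ (W : Matrix m n ℂ), A * W * Bᵀ = z • W →
      W * (s.map (fun a => z • (1 : Matrix n n ℂ) - a • Bᵀ)).prod
        = (s.map (fun a => A - a • (1 : Matrix m m ℂ))).prod * W * Bᵀ ^ s.length := by
    intro s
    induction s with
    | nil => intro W hW; simp [Matrix.mul_one, Matrix.one_mul]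
    | cons a s ih =>
      intro W hW
      have hcommA : A * (A - a • 1) = (A - a • 1) * A := by
        simp [mul_sub, sub_mul, mul_smul_comm, smul_mul_assoc]
      have hWa : A * ((A - a • 1) * W * Bᵀ) * Bᵀ = z • ((A - a • 1) * W * Bᵀ) := by
        calc A * ((A - a • 1) * W * Bᵀ) * Bᵀ
            = (A * (A - a • 1)) * W * (Bᵀ * Bᵀ) := by simp only [Matrix.mul_assoc]
          _ = (A - a • 1) * (A * W * Bᵀ) * Bᵀ := by rw [hcommA]; simp only [Matrix.mul_assoc]
          _ = (A - a • 1) * (z • W) * Bᵀ := by rw [hW]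
          _ = z • ((A - a • 1) * W * Bᵀ) := by rw [Matrix.mul_smul, Matrix.smul_mul]
      have hWfac : W * (z • (1 : Matrix n n ℂ) - a • Bᵀ) = (A - a • 1) * W * Bᵀ := by
        rw [Matrix.mul_sub, Matrix.mul_smul, Matrix.mul_one, Matrix.mul_smul, ← hW,
          Matrix.sub_mul, Matrix.sub_mul, Matrix.smul_mul, Matrix.smul_mul, Matrix.one_mul]
      have hcommM : Commute (A - a • (1 : Matrix m m ℂ))
          ((s.map fun b => A - b • (1 : Matrix m m ℂ))).prod := by
        apply Commute.list_prod_right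
        intro x hx
        obtain ⟨b, _, rfl⟩ := List.mem_map.mp hx
        exact Commute.sub_left
          (Commute.sub_right (Commute.refl A) ((Commute.one_right A).smul_right b))
          (Commute.sub_right ((Commute.one_left A).smul_left a)
            (((Commute.one_left (1 : Matrix m m ℂ))).smul_left a |>.smul_right b))
      calc W * ((a :: s).map fun c => z • (1 : Matrix n n ℂ) - c • Bᵀ).prod
          = (W * (z • (1 : Matrix n n ℂ) - a • Bᵀ)) *
            (s.map fun c => z • (1 : Matrix n n ℂ) - c • Bᵀ).prod := by
            rw [List.map_cons, List.prod_cons, Matrix.mul_assoc]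
        _ = ((A - a • 1) * W * Bᵀ) * (s.map fun c => z • (1 : Matrix n n ℂ) - c • Bᵀ).prod := by
            rw [hWfac]
        _ = (s.map fun b => A - b • (1 : Matrix m m ℂ)).prod * ((A - a • 1) * W * Bᵀ) *
            Bᵀ ^ s.length := ih _ hWa
        _ = ((a :: s).map fun b => A - b • (1 : Matrix m m ℂ)).prod * W *
            Bᵀ ^ (a :: s).length := by
            rw [List.map_cons, List.prod_cons, List.length_cons, pow_succ', hcommM.eq]
            simp only [Matrix.mul_assoc]
  have hMr : ((l.map fun a => A - a • (1 : Matrix m m ℂ))).prod = 0 := by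
    have h2 := A.aeval_self_charpoly
    rw [hsplit, map_list_prod, List.map_map] at h2
    simpa [Function.comp_def, Algebra.algebraMap_eq_smul_one] using h2
  have hVN : V * (l.map (fun a => z • (1 : Matrix n n ℂ) - a • Bᵀ)).prod = 0 := by
    rw [key l V hVrel, hMr, Matrix.zero_mul, Matrix.zero_mul]
  set Nr := (l.map (fun a => z • (1 : Matrix n n ℂ) - a • Bᵀ)).prod with hNr
  have hunit : IsUnit Nr := by
    rw [Matrix.isUnit_iff_isUnit_det, isUnit_iff_ne_zero]
    have hd : Nr.det = (l.map (fun a => (z • (1 : Matrix n n ℂ) - a • Bᵀ).det)).prod := by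
      rw [hNr, show ((l.map (fun a => z • (1 : Matrix n n ℂ) - a • Bᵀ)).prod).det
        = Matrix.detMonoidHom ((l.map (fun a => z • (1 : Matrix n n ℂ) - a • Bᵀ)).prod)
        from rfl, map_list_prod, List.map_map]
      simp [Function.comp_def]
    rw [hd]
    apply List.prod_ne_zero
    rw [List.mem_map]
    rintro ⟨a, ha, hfa⟩
    have haspec : a ∈ spectrum ℂ A := by
      apply root_mem_spectrum A
      apply isRoot_of_mem_roots
      rw [← hl]; exact_mod_cast ha
    by_cases ha0 : a = 0
    · rw [ha0] at hfa
      simp only [zero_smul, sub_zero, det_smul, det_one, mul_one] at hfa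
      exact pow_ne_zero _ hz hfa
    · have hb : z / a ∉ spectrum ℂ B := fun hbmem =>
        hcon a haspec (z / a) hbmem (by field_simp)
      rw [mem_spectrum_iff_det] at hb
      have heq : z • (1 : Matrix n n ℂ) - a • Bᵀ = a • ((z / a) • (1 : Matrix n n ℂ) - B)ᵀ := by
        rw [transpose_sub, transpose_smul, transpose_one, smul_sub, smul_smul,
          mul_div_cancel₀ _ ha0]
      rw [heq, det_smul, det_transpose] at hfa
      rcases mul_eq_zero.mp hfa with h | h
      · exact pow_ne_zero _ ha0 h
      · exact hb h
  have hinv : Nr * (↑hunit.unit⁻¹ : Matrix n n ℂ) = 1 := hunit.mul_val_inv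
  have hV0 : V = 0 := by
    calc V = V * (Nr * (↑hunit.unit⁻¹ : Matrix n n ℂ)) := by rw [hinv, Matrix.mul_one]
      _ = (V * Nr) * (↑hunit.unit⁻¹ : Matrix n n ℂ) := by rw [Matrix.mul_assoc]
      _ = 0 := by rw [hVN, Matrix.zero_mul]
  apply hv0
  funext p
  exact congrFun (congrFun hV0 p.1) p.2

lemma matrix_spectrum_nonempty [Nonempty n] (M : Matrix n n ℂ) :
    (spectrum ℂ M).Nonempty := by
  have hd : M.charpoly.natDegree = Fintype.card n := M.charpoly_natDegree_eq_dim
  have hdeg : M.charpoly.degree ≠ 0 := by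
    rw [degree_eq_natDegree M.charpoly_monic.ne_zero, hd]
    exact_mod_cast Fintype.card_pos.ne'
  obtain ⟨z, hz⟩ := IsAlgClosed.exists_root M.charpoly hdeg
  exact ⟨z, root_mem_spectrum M hz⟩

lemma affine_spec {N : ℕ} (hN : 0 < N) (H : Matrix (Fin N) (Fin N) ℝ) (μ : ℝ) {a : ℂ}
    (ha : a ∈ spectrum ℂ (((1 : Matrix (Fin N) (Fin N) ℝ) - μ • H).map (fun x => (x : ℂ)))) :
    ∃ h ∈ specC H, a = 1 - (μ : ℂ) * h := by
  have : Nonempty (Fin N) := ⟨⟨0, hN⟩⟩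
  have hmap : ((1 : Matrix (Fin N) (Fin N) ℝ) - μ • H).map (fun x => (x : ℂ))
      = 1 - (μ : ℂ) • (H.map fun x => (x : ℂ)) := by
    ext i k
    simp only [Matrix.map_apply, Matrix.sub_apply, Matrix.smul_apply, Matrix.one_apply,
      smul_eq_mul]
    split_ifs <;> push_cast <;> ring
  rw [hmap, mem_spectrum_iff_det] at ha
  by_cases hμ : μ = 0
  · obtain ⟨h, hh⟩ := matrix_spectrum_nonempty (H.map (fun x => (x : ℂ)))
    refine ⟨h, hh, ?_⟩
    subst hμ
    simp only [Complex.ofReal_zero, zero_smul, sub_zero] at ha ⊢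
    have heq : a • (1 : Matrix (Fin N) (Fin N) ℂ) - 1 = (a - 1) • 1 := by
      rw [sub_smul, one_smul]
    rw [heq, det_smul, det_one, mul_one] at ha
    have : a - 1 = 0 := by
      have hcard : Fintype.card (Fin N) ≠ 0 := by simp [hN.ne']
      exact pow_eq_zero_iff hcard |>.mp ha
    rw [sub_eq_zero.mp this]
    push_cast
    ring
  · set h : ℂ := (1 - a) / (μ : ℂ) with hhdef
    have hμC : (μ : ℂ) ≠ 0 := by exact_mod_cast hμ
    have hc : (-(μ : ℂ)) * ((1 - a) / (μ : ℂ)) = a - 1 := by field_simp; ring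
    have heq : a • (1 : Matrix (Fin N) (Fin N) ℂ) - (1 - (μ : ℂ) • (H.map fun x => (x : ℂ)))
        = (-(μ : ℂ)) • (h • (1 : Matrix (Fin N) (Fin N) ℂ) - H.map fun x => (x : ℂ)) := by
      rw [smul_sub, smul_smul, hhdef, hc, sub_smul, one_smul, neg_smul, sub_neg_eq_add]
      abel
    rw [heq, det_smul] at ha
    rcases mul_eq_zero.mp ha with h0 | h0
    · exact absurd h0 (pow_ne_zero _ (neg_ne_zero.mpr hμC))
    · refine ⟨h, ?_, ?_⟩
      · rw [specC, mem_spectrum_iff_det]; exact h0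
      · rw [hhdef]; field_simp; ring


end Aux

/-- **Lemma 3.1, sufficiency part.** With `L = ρ(S0) > 0`, `0 ∉ σ(H)` and
`Δ(h) = |h|²/L² − (Im h)²`, if `Δ(h) > 0` for every complex eigenvalue `h` of `H` and
`μ` satisfies `(Re h − √Δ(h))/|h|² < μ < (Re h + √Δ(h))/|h|²` for every such `h`, then
`I_N ⊗ S0 − μ (H ⊗ S0)` is Schur. -/
theorem observer_gain_sufficient (N q : ℕ) (hN : 0 < N) (hq : 0 < q)
    (S0 : Matrix (Fin q) (Fin q) ℝ) (H : Matrix (Fin N) (Fin N) ℝ)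
    (L : ℝ) (hL : IsGreatest ((fun z : ℂ => ‖z‖) '' specC S0) L) (hLpos : 0 < L)
    (hH0 : (0 : ℂ) ∉ specC H)
    (hΔ : ∀ h ∈ specC H, 0 < ‖h‖ ^ 2 / L ^ 2 - h.im ^ 2)
    (μ : ℝ)
    (hμ : ∀ h ∈ specC H,
      (h.re - Real.sqrt (‖h‖ ^ 2 / L ^ 2 - h.im ^ 2)) / ‖h‖ ^ 2 < μ ∧
      μ < (h.re + Real.sqrt (‖h‖ ^ 2 / L ^ 2 - h.im ^ 2)) / ‖h‖ ^ 2) :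
    IsSchur ((1 : Matrix (Fin N) (Fin N) ℝ) ⊗ₖ S0 - μ • (H ⊗ₖ S0)) := by
  intro z hzmem
  by_contra hge
  push_neg at hge
  have hmapeq : (((1 : Matrix (Fin N) (Fin N) ℝ) ⊗ₖ S0 - μ • (H ⊗ₖ S0)).map (fun x => (x : ℂ)))
      = (((1 : Matrix (Fin N) (Fin N) ℝ) - μ • H).map (fun x => (x : ℂ)))
        ⊗ₖ (S0.map (fun x => (x : ℂ))) := by
    ext ⟨i, j⟩ ⟨k, l⟩
    simp only [Matrix.map_apply, Matrix.sub_apply, Matrix.smul_apply, kroneckerMap_apply,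
      Matrix.one_apply, smul_eq_mul]
    split_ifs <;> push_cast <;> ring
  rw [specC, hmapeq] at hzmem
  have hz0 : z ≠ 0 := by
    intro h0
    rw [h0, norm_zero] at hge
    linarith
  obtain ⟨a, hamem, b, hbmem, hzeq⟩ := kron_spectrum _ _ hz0 hzmem
  obtain ⟨h, hhmem, haeq⟩ := affine_spec hN H μ hamem
  have hbL : ‖b‖ ≤ L := hL.2 ⟨b, hbmem, rfl⟩
  have hh0 : h ≠ 0 := fun h0 => hH0 (h0 ▸ hhmem)
  have hahpos : 0 < ‖h‖ := norm_pos_iff.mpr hh0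
  set ah := ‖h‖ with hahdef
  set D := ‖h‖ ^ 2 / L ^ 2 - h.im ^ 2 with hDdef
  have hDpos : 0 < D := hΔ h hhmem
  have hs : Real.sqrt D ^ 2 = D := Real.sq_sqrt hDpos.le
  have hah : ah ^ 2 = h.re ^ 2 + h.im ^ 2 := by
    rw [hahdef, Complex.sq_norm, Complex.normSq_apply]; ring
  have hDL : D * L ^ 2 = ah ^ 2 - h.im ^ 2 * L ^ 2 := by
    rw [hDdef]; field_simp; ring
  obtain ⟨hlo, hhi⟩ := hμ h hhmem
  have hah2pos : (0 : ℝ) < ah ^ 2 := by positivity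
  have hlo' : h.re - Real.sqrt D < μ * ah ^ 2 := by
    rw [div_lt_iff₀ hah2pos] at hlo; linarith
  have hhi' : μ * ah ^ 2 < h.re + Real.sqrt D := by
    rw [lt_div_iff₀ hah2pos] at hhi; linarith
  have h1 : (μ * ah ^ 2 - h.re) ^ 2 < D := by
    nlinarith [mul_pos (by linarith : (0:ℝ) < Real.sqrt D - (μ * ah ^ 2 - h.re))
      (by linarith : (0:ℝ) < Real.sqrt D + (μ * ah ^ 2 - h.re))]
  clear_value ah D
  have hare : a.re = 1 - μ * h.re := by rw [haeq]; simp
  have haim : a.im = -(μ * h.im) := by rw [haeq]; simp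
  have haabs : ‖a‖ ^ 2 = (1 - μ * h.re) ^ 2 + (μ * h.im) ^ 2 := by
    rw [Complex.sq_norm, Complex.normSq_apply, hare, haim]; ring
  have hkey : ‖a‖ ^ 2 * L ^ 2 < 1 := by
    rw [haabs]
    have hL2 : (0 : ℝ) < L ^ 2 := by positivity
    have h2 : (μ * ah ^ 2 - h.re) ^ 2 * L ^ 2 < D * L ^ 2 :=
      mul_lt_mul_of_pos_right h1 hL2
    rw [hDL] at h2
    have e1 : ((1 - μ * h.re) ^ 2 + (μ * h.im) ^ 2) * L ^ 2 * ah ^ 2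
        = (ah ^ 2 + (μ * ah ^ 2 - h.re) ^ 2 - h.re ^ 2) * L ^ 2 := by
      linear_combination (-(μ ^ 2) * ah ^ 2 * L ^ 2) * hah
    have e2 : ah ^ 2 * L ^ 2 = h.re ^ 2 * L ^ 2 + h.im ^ 2 * L ^ 2 := by
      linear_combination L ^ 2 * hah
    have h3 : ((1 - μ * h.re) ^ 2 + (μ * h.im) ^ 2) * L ^ 2 * ah ^ 2 < ah ^ 2 := by
      rw [e1]
      nlinarith [h2, e2]
    exact lt_of_mul_lt_mul_right (h3.trans_eq (one_mul _).symm) hah2pos.le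
  have habL : ‖a‖ * L < 1 := by
    have h5 : (‖a‖ * L) ^ 2 < 1 := by rw [mul_pow]; exact hkey
    have hnn : 0 ≤ ‖a‖ * L := mul_nonneg (norm_nonneg a) hLpos.le
    nlinarith [h5, hnn]
  have : ‖z‖ = ‖a‖ * ‖b‖ := by rw [hzeq, norm_mul]
  have hfin : ‖z‖ < 1 := by
    calc ‖z‖ = ‖a‖ * ‖b‖ := this
      _ ≤ ‖a‖ * L := mul_le_mul_of_nonneg_left hbL (norm_nonneg a)
      _ < 1 := habL
  linarith
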